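/- The type-B Narayana polynomial \sum_{i=0}^{n} \binom{n}{i}^2 x^i equals \sum_{i=0}^{\lfloor n/2 \rfloor} \binom{n}{i, i, n-2i} x^i (1+x)^{n-2i}, where \binom{n}{i,i,n-2i} = n!/(i!\, i!\, (n-2i)!). -/

import Mathlib

open Polynomial Finset

lemma natkey' (n k i : ℕ) (h2 : 2*i ≤ n) (hik : i ≤ k) :
    n.choose k * (k.choose i * (n-k).choose i) * (i.factorial * i.factorial * (n-2*i).factorial)
      = n.factorial * (n-2*i).choose (k-i) := by
  rcases le_or_gt k n with hkn | hkn
  · rcases le_or_gt i (n - k) with hink | hink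
    · have h1 : n.choose k * (k.factorial * (n-k).factorial) = n.factorial :=
        Nat.choose_mul_factorial_mul_factorial hkn ▸ by ring
      have h2' : k.choose i * (i.factorial * (k-i).factorial) = k.factorial :=
        Nat.choose_mul_factorial_mul_factorial hik ▸ by ring
      have h3 : (n-k).choose i * (i.factorial * (n-k-i).factorial) = (n-k).factorial :=
        Nat.choose_mul_factorial_mul_factorial hink ▸ by ring
      have hki : k - i ≤ n - 2*i := by omega
      have h4 : (n-2*i).choose (k-i) * ((k-i).factorial * (n-k-i).factorial)
          = (n-2*i).factorial := by
        have := Nat.choose_mul_factorial_mul_factorial hki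
        have e : n - 2*i - (k - i) = n - k - i := by omega
        rw [e] at this; linarith [this]
      have hpos : 0 < (k-i).factorial * (n-k-i).factorial :=
        Nat.mul_pos (Nat.factorial_pos _) (Nat.factorial_pos _)
      apply Nat.eq_of_mul_eq_mul_right hpos
      calc n.choose k * (k.choose i * (n-k).choose i) *
              (i.factorial * i.factorial * (n-2*i).factorial) *
              ((k-i).factorial * (n-k-i).factorial)
          = n.choose k * ((k.choose i * (i.factorial * (k-i).factorial)) *
              ((n-k).choose i * (i.factorial * (n-k-i).factorial))) * (n-2*i).factorial := by ring
        _ = n.choose k * (k.factorial * (n-k).factorial) * (n-2*i).factorial := by rw [h2', h3]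
        _ = n.factorial * (n-2*i).factorial := by rw [h1]
        _ = n.factorial * ((n-2*i).choose (k-i) *
              ((k-i).factorial * (n-k-i).factorial)) := by rw [h4]
        _ = n.factorial * (n-2*i).choose (k-i) *
              ((k-i).factorial * (n-k-i).factorial) := by ring
    · have e1 : (n-k).choose i = 0 := Nat.choose_eq_zero_of_lt hink
      have e2 : (n-2*i).choose (k-i) = 0 := Nat.choose_eq_zero_of_lt (by omega)
      simp [e1, e2]
  · have e1 : n.choose k = 0 := Nat.choose_eq_zero_of_lt hkn
    have e2 : (n-2*i).choose (k-i) = 0 := Nat.choose_eq_zero_of_lt (by omega)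
    simp [e1, e2]

lemma realkey (n k i : ℕ) (h2 : 2*i ≤ n) (hik : i ≤ k) :
    (n.factorial : ℝ) / ((i.factorial : ℝ) * (i.factorial : ℝ) * ((n - 2*i).factorial : ℝ))
      * ((n-2*i).choose (k-i) : ℝ)
      = (n.choose k : ℝ) * ((k.choose i : ℝ) * ((n-k).choose i : ℝ)) := by
  have hne : (i.factorial : ℝ) * (i.factorial : ℝ) * ((n - 2*i).factorial : ℝ) ≠ 0 := by
    positivity
  rw [div_mul_eq_mul_div, div_eq_iff hne]
  rw [← Nat.cast_mul, ← natkey' n k i h2 hik]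
  push_cast; ring

lemma vander (n k : ℕ) (hk : k ≤ n) :
    ∑ i ∈ Finset.range (n/2 + 1), k.choose i * (n-k).choose i = n.choose k := by
  have h1 : n.choose k = ∑ i ∈ Finset.range (n-k+1), k.choose i * (n-k).choose ((n-k)-i) := by
    rw [← Nat.choose_symm hk]
    have := Nat.add_choose_eq k (n-k) (n-k)
    rw [Nat.add_sub_cancel' hk] at this
    rw [this, Finset.Nat.sum_antidiagonal_eq_sum_range_succ_mk]
  have h2 : ∀ i ∈ Finset.range (n-k+1), k.choose i * (n-k).choose ((n-k)-i)
      = (fun i => k.choose i * (n-k).choose i) i := by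
    intro i hi
    simp only [Finset.mem_range] at hi
    rw [Nat.choose_symm (by omega : i ≤ n-k)]
  rw [h1, Finset.sum_congr rfl h2]
  have key : ∀ m, m ≤ n → (∀ i, m < i → k.choose i * (n-k).choose i = 0) →
      ∑ i ∈ Finset.range (m+1), k.choose i * (n-k).choose i
        = ∑ i ∈ Finset.range (n+1), k.choose i * (n-k).choose i := by
    intro m hm hz
    apply Finset.sum_subset
    · exact Finset.range_subset_range.2 (by omega)
    · intro i _ hi
      simp only [Finset.mem_range, not_lt] at hi
      exact hz i (by omega)
  rw [key (n-k) (by omega) (fun i hi => by simp [Nat.choose_eq_zero_of_lt hi]),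
      key (n/2) (by omega) (fun i hi => ?_)]
  rcases le_or_gt i k with h | h
  · have : n - k < i := by omega
    simp [Nat.choose_eq_zero_of_lt this]
  · simp [Nat.choose_eq_zero_of_lt h]

/-- the type-B Narayana polynomial `∑_{i=0}^n C(n,i)² x^i` equals
`∑_{i=0}^{⌊n/2⌋} (n!/(i! i! (n-2i)!)) x^i (1+x)^{n-2i}`. -/
theorem narayana_B_gamma_expansion (n : ℕ) :
    ∑ i ∈ Finset.range (n + 1), Polynomial.C (((n.choose i : ℝ)) ^ 2) * Polynomial.X ^ i =
      ∑ i ∈ Finset.range (n / 2 + 1),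
        Polynomial.C ((n.factorial : ℝ) /
            ((i.factorial : ℝ) * (i.factorial : ℝ) * ((n - 2 * i).factorial : ℝ))) *
          Polynomial.X ^ i * (1 + Polynomial.X) ^ (n - 2 * i) := by
  ext k
  rw [finset_sum_coeff, finset_sum_coeff]
  have lhs : ∑ i ∈ Finset.range (n+1), (C ((n.choose i:ℝ)^2) * X^i).coeff k
      = (n.choose k : ℝ)^2 := by
    simp only [coeff_C_mul, coeff_X_pow, mul_ite, mul_one, mul_zero]
    rw [Finset.sum_ite_eq (Finset.range (n+1)) k (fun i => (n.choose i : ℝ)^2)]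
    split_ifs with h
    · rfl
    · simp only [Finset.mem_range, not_lt] at h
      simp [Nat.choose_eq_zero_of_lt (by omega : n < k)]
  rw [lhs]
  have rhs : ∀ i ∈ Finset.range (n/2+1),
      (C ((n.factorial : ℝ) / ((i.factorial : ℝ) * (i.factorial : ℝ) *
          ((n - 2*i).factorial : ℝ))) * X^i * (1+X)^(n-2*i)).coeff k
        = (n.choose k : ℝ) * ((k.choose i : ℝ) * ((n-k).choose i : ℝ)) := by
    intro i hi
    have h2 : 2*i ≤ n := by
      simp only [Finset.mem_range] at hi; omega
    rw [mul_right_comm, coeff_mul_X_pow']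
    split_ifs with h
    · rw [coeff_C_mul, coeff_one_add_X_pow]
      exact realkey n k i h2 h
    · push_neg at h
      simp [Nat.choose_eq_zero_of_lt h]
  rw [Finset.sum_congr rfl rhs, ← Finset.mul_sum]
  rcases le_or_gt k n with hk | hk
  · have : ∑ i ∈ Finset.range (n/2+1), ((k.choose i : ℝ) * ((n-k).choose i : ℝ))
        = (n.choose k : ℝ) := by
      rw [← vander n k hk]; push_cast; rfl
    rw [this, sq]
  · simp [Nat.choose_eq_zero_of_lt hk]
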